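/- There exist absolute constants κ > 0 and c′ > 0 such that: for all integers q ≥ 2, N ≥ 2, g ≥ 2, k ≥ 2 and all real numbers θ_1, …, θ_{2g} satisfying the Artin-type bound, if log g > κ log(Nq) then (log g)^{-c′N/q^k} · exp(-c′N/√q) ≤ ∏_{l=1}^{2g} |1 - q^{-(2k-1)/2} e(θ_l)| / ((1-q^{-k})(1-q^{1-k})) ≤ (log g)^{c′N/q^k} · exp(c′N/√q). -/

import Mathlib

open Finset

/-- `e θ = exp(2πiθ)`. -/
noncomputable def e (θ : ℝ) : ℂ := Complex.exp (2 * Real.pi * Complex.I * θ)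

/-- The Artin-type bound: for every `m ≥ 1`,
`|∑_{l=1}^{2g} e(mθ_l)| ≤ (N-1)(q^m+1)q^{-m/2}`. -/
def ArtinBound (q N g : ℕ) (θ : ℕ → ℝ) : Prop :=
  ∀ m : ℕ, 1 ≤ m →
    ‖∑ l ∈ Finset.range (2 * g), e ((m : ℝ) * θ l)‖ ≤
      ((N : ℝ) - 1) * ((q : ℝ) ^ m + 1) * (q : ℝ) ^ (-(m : ℝ) / 2)

lemma norm_e (θ : ℝ) : ‖e θ‖ = 1 := by
  have : (2 * Real.pi * Complex.I * θ : ℂ) = ((2 * Real.pi * θ : ℝ) : ℂ) * Complex.I := by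
    push_cast; ring
  rw [e, this, Complex.norm_exp_ofReal_mul_I]

lemma e_pow (θ : ℝ) (m : ℕ) : (e θ) ^ m = e ((m : ℝ) * θ) := by
  rw [e, e, ← Complex.exp_nat_mul]
  congr 1
  push_cast; ring

lemma log_one_sub_bounds {t : ℝ} (ht0 : 0 ≤ t) (ht : t ≤ 1/2) :
    -(2*t) ≤ Real.log (1 - t) ∧ Real.log (1 - t) ≤ 0 := by
  have h1 : (0:ℝ) < 1 - t := by linarith
  constructor
  · have h2 : Real.log (1-t)⁻¹ ≤ (1-t)⁻¹ - 1 := Real.log_le_sub_one_of_pos (by positivity)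
    have h3 : (1-t)⁻¹ ≤ 1 + 2*t := by
      rw [inv_le_iff_one_le_mul₀ h1]
      nlinarith
    rw [Real.log_inv] at h2
    linarith
  · exact Real.log_nonpos (by linarith) (by linarith)

lemma rpow_aux1 (q k m : ℕ) (hq : 2 ≤ q) :
    ((q:ℝ) ^ (-(2 * (k:ℝ) - 1) / 2)) ^ m * ((q:ℝ) ^ m * (q:ℝ) ^ (-(m:ℝ)/2))
      = ((q:ℝ) ^ (1 - (k:ℝ))) ^ m := by
  have hq0 : (0:ℝ) < q := by positivity
  rw [← Real.rpow_natCast ((q:ℝ) ^ (-(2 * (k:ℝ) - 1) / 2)) m,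
      ← Real.rpow_natCast ((q:ℝ) ^ (1 - (k:ℝ))) m,
      ← Real.rpow_natCast (q:ℝ) m,
      ← Real.rpow_mul hq0.le, ← Real.rpow_mul hq0.le,
      ← Real.rpow_add hq0, ← Real.rpow_add hq0]
  congr 1
  ring

lemma rpow_aux2 (q k m : ℕ) (hq : 2 ≤ q) :
    ((q:ℝ) ^ (-(2 * (k:ℝ) - 1) / 2)) ^ m * (q:ℝ) ^ (-(m:ℝ)/2)
      = ((q:ℝ) ^ (-(k:ℝ))) ^ m := by
  have hq0 : (0:ℝ) < q := by positivity
  rw [← Real.rpow_natCast ((q:ℝ) ^ (-(2 * (k:ℝ) - 1) / 2)) m,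
      ← Real.rpow_natCast ((q:ℝ) ^ (-(k:ℝ))) m,
      ← Real.rpow_mul hq0.le, ← Real.rpow_mul hq0.le,
      ← Real.rpow_add hq0]
  congr 1
  ring

lemma key_abstract (M : ℕ) (w : ℕ → ℂ) (r x y NN : ℝ)
    (hr0 : 0 < r) (hr1 : r < 1)
    (hwn : ∀ l, ‖w l‖ = r)
    (hx0 : 0 < x) (hxhalf : x ≤ 1/2) (hy0 : 0 < y) (hyx : y ≤ x) (hNN : 1 ≤ NN)
    (hbound : ∀ m : ℕ, 1 ≤ m → ‖∑ l ∈ Finset.range M, w l ^ m‖ ≤ NN * (x^m + y^m)) :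
    0 < (∏ l ∈ Finset.range M, ‖1 - w l‖) / ((1-y)*(1-x)) ∧
    |Real.log ((∏ l ∈ Finset.range M, ‖1 - w l‖) / ((1-y)*(1-x)))|
      ≤ 4*NN*x + 4*x := by
  have hx1 : x < 1 := by linarith
  have hy1 : y < 1 := by linarith
  have habs : ∀ l, 1 - r ≤ ‖1 - w l‖ := by
    intro l
    have := norm_sub_norm_le (1 : ℂ) (w l)
    rw [norm_one, hwn l] at this
    exact this
  have hpos : ∀ l, 0 < ‖1 - w l‖ :=
    fun l => lt_of_lt_of_le (by linarith) (habs l)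
  have hT : HasSum (fun n : ℕ => ∑ l ∈ Finset.range M, w l ^ n / (n : ℂ))
      (∑ l ∈ Finset.range M, -(Complex.log (1 - w l))) :=
    hasSum_sum fun l _ =>
      Complex.hasSum_taylorSeries_neg_log (by rw [hwn]; exact hr1)
  have hT' : HasSum (fun n : ℕ => ∑ l ∈ Finset.range M, w l ^ (n+1) / ((n+1 : ℕ) : ℂ))
      (∑ l ∈ Finset.range M, -(Complex.log (1 - w l))) := by
    refine (hasSum_nat_add_iff (f := fun n : ℕ => ∑ l ∈ Finset.range M, w l ^ n / (n : ℂ)) 1).mpr ?_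
    simpa using hT
  have hFb : ∀ n : ℕ, ‖∑ l ∈ Finset.range M, w l ^ (n+1) / ((n+1 : ℕ) : ℂ)‖
      ≤ NN * (x^(n+1) + y^(n+1)) := by
    intro n
    have hm' : (1:ℝ) ≤ ((n+1 : ℕ) : ℝ) := by exact_mod_cast Nat.le_add_left 1 n
    calc ‖∑ l ∈ Finset.range M, w l ^ (n+1) / ((n+1 : ℕ) : ℂ)‖
        = ‖∑ l ∈ Finset.range M, w l ^ (n+1)‖ / ((n+1 : ℕ) : ℝ) := by
          rw [← Finset.sum_div, norm_div, Complex.norm_natCast]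
      _ ≤ ‖∑ l ∈ Finset.range M, w l ^ (n+1)‖ := by
          rw [div_le_iff₀ (by linarith)]
          nlinarith [norm_nonneg (∑ l ∈ Finset.range M, w l ^ (n+1))]
      _ ≤ NN * (x^(n+1) + y^(n+1)) := hbound (n+1) (Nat.le_add_left 1 n)
  have hgx : HasSum (fun n : ℕ => x^(n+1)) (x * (1-x)⁻¹) := by
    have := (hasSum_geometric_of_lt_one hx0.le hx1).mul_left x
    simpa only [← pow_succ'] using this
  have hgy : HasSum (fun n : ℕ => y^(n+1)) (y * (1-y)⁻¹) := by
    have := (hasSum_geometric_of_lt_one hy0.le hy1).mul_left y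
    simpa only [← pow_succ'] using this
  have hg : HasSum (fun n : ℕ => NN * (x^(n+1) + y^(n+1)))
      (NN * (x * (1-x)⁻¹ + y * (1-y)⁻¹)) := (hgx.add hgy).mul_left _
  have hsummable : Summable (fun n : ℕ => ‖∑ l ∈ Finset.range M, w l ^ (n+1) / ((n+1 : ℕ) : ℂ)‖) :=
    Summable.of_nonneg_of_le (fun n => norm_nonneg _) hFb hg.summable
  have hnormT : ‖∑ l ∈ Finset.range M, -(Complex.log (1 - w l))‖
      ≤ NN * (x * (1-x)⁻¹ + y * (1-y)⁻¹) := by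
    rw [← hT'.tsum_eq]
    refine (norm_tsum_le_tsum_norm hsummable).trans ?_
    rw [← hg.tsum_eq]
    exact Summable.tsum_le_tsum hFb hsummable hg.summable
  have hinvx : (1-x)⁻¹ ≤ 2 := by
    rw [inv_le_iff_one_le_mul₀ (by linarith)]
    linarith
  have hinvy : (1-y)⁻¹ ≤ 2 := by
    rw [inv_le_iff_one_le_mul₀ (by linarith)]
    linarith
  have hTbound : ‖∑ l ∈ Finset.range M, -(Complex.log (1 - w l))‖ ≤ 4 * NN * x := by
    have hix : (0:ℝ) < (1-x)⁻¹ := inv_pos.mpr (by linarith)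
    have hiy : (0:ℝ) < (1-y)⁻¹ := inv_pos.mpr (by linarith)
    have h1 : x * (1-x)⁻¹ ≤ 2 * x := by nlinarith
    have h2 : y * (1-y)⁻¹ ≤ 2 * y := by nlinarith
    nlinarith
  have hP0 : 0 < ∏ l ∈ Finset.range M, ‖1 - w l‖ :=
    Finset.prod_pos fun l _ => hpos l
  have hlogP : Real.log (∏ l ∈ Finset.range M, ‖1 - w l‖)
      = -(∑ l ∈ Finset.range M, -(Complex.log (1 - w l))).re := by
    rw [Real.log_prod fun l _ => (hpos l).ne']
    rw [Complex.re_sum, ← Finset.sum_neg_distrib]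
    refine Finset.sum_congr rfl fun l _ => ?_
    rw [Complex.neg_re, neg_neg, Complex.log_re]
  have hlogPbound : |Real.log (∏ l ∈ Finset.range M, ‖1 - w l‖)| ≤ 4 * NN * x := by
    rw [hlogP, abs_neg]
    exact le_trans (Complex.abs_re_le_norm _) hTbound
  have hD0 : (0:ℝ) < (1-y)*(1-x) := by nlinarith
  have hly := log_one_sub_bounds hy0.le (le_trans hyx hxhalf)
  have hlx := log_one_sub_bounds hx0.le hxhalf
  have hlogD : |Real.log ((1-y)*(1-x))| ≤ 4 * x := by
    rw [Real.log_mul (by linarith : (1:ℝ)-y ≠ 0) (by linarith : (1:ℝ)-x ≠ 0), abs_le]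
    constructor <;> linarith [hly.1, hly.2, hlx.1, hlx.2]
  refine ⟨div_pos hP0 hD0, ?_⟩
  rw [Real.log_div hP0.ne' hD0.ne']
  calc |Real.log (∏ l ∈ Finset.range M, ‖1 - w l‖) - Real.log ((1-y)*(1-x))|
      ≤ |Real.log (∏ l ∈ Finset.range M, ‖1 - w l‖)| + |Real.log ((1-y)*(1-x))| :=
        abs_sub _ _
    _ ≤ 4*NN*x + 4*x := add_le_add hlogPbound hlogD

lemma key_bound (q N g k : ℕ) (θ : ℕ → ℝ) (hq : 2 ≤ q) (hN : 2 ≤ N) (hk : 2 ≤ k)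
    (hA : ArtinBound q N g θ) :
    0 < (∏ l ∈ Finset.range (2 * g),
          ‖1 - (((q : ℝ) ^ (-(2 * (k : ℝ) - 1) / 2) : ℝ) : ℂ) * e (θ l)‖) /
        ((1 - (q : ℝ) ^ (-(k : ℝ))) * (1 - (q : ℝ) ^ (1 - (k : ℝ)))) ∧
    |Real.log ((∏ l ∈ Finset.range (2 * g),
          ‖1 - (((q : ℝ) ^ (-(2 * (k : ℝ) - 1) / 2) : ℝ) : ℂ) * e (θ l)‖) /
        ((1 - (q : ℝ) ^ (-(k : ℝ))) * (1 - (q : ℝ) ^ (1 - (k : ℝ)))))|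
      ≤ 8 * N / Real.sqrt q := by
  have hq0 : (0:ℝ) < q := by positivity
  have hq1 : (1:ℝ) < q := by exact_mod_cast hq
  have hk' : (2:ℝ) ≤ k := by exact_mod_cast hk
  have hN' : (2:ℝ) ≤ N := by exact_mod_cast hN
  have hr0 : 0 < (q:ℝ) ^ (-(2 * (k:ℝ) - 1) / 2) := Real.rpow_pos_of_pos hq0 _
  have hr1 : (q:ℝ) ^ (-(2 * (k:ℝ) - 1) / 2) < 1 :=
    Real.rpow_lt_one_of_one_lt_of_neg hq1 (by linarith)
  have hx0 : 0 < (q:ℝ) ^ (1 - (k:ℝ)) := Real.rpow_pos_of_pos hq0 _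
  have hy0 : 0 < (q:ℝ) ^ (-(k:ℝ)) := Real.rpow_pos_of_pos hq0 _
  have hxhalf : (q:ℝ) ^ (1 - (k:ℝ)) ≤ 1/2 := by
    have h1 : (q:ℝ) ^ (1 - (k:ℝ)) ≤ (q:ℝ) ^ (-1 : ℝ) :=
      Real.rpow_le_rpow_of_exponent_le hq1.le (by linarith)
    rw [Real.rpow_neg_one] at h1
    have h2 : (q:ℝ)⁻¹ ≤ 1/2 := by
      rw [inv_le_comm₀ hq0 (by norm_num)]
      norm_num
      exact_mod_cast hq
    linarith
  have hyx : (q:ℝ) ^ (-(k:ℝ)) ≤ (q:ℝ) ^ (1 - (k:ℝ)) :=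
    Real.rpow_le_rpow_of_exponent_le hq1.le (by linarith)
  have hwn : ∀ l, ‖((((q:ℝ) ^ (-(2 * (k:ℝ) - 1) / 2) : ℝ) : ℂ) * e (θ l))‖
      = (q:ℝ) ^ (-(2 * (k:ℝ) - 1) / 2) := by
    intro l
    rw [norm_mul, Complex.norm_real, Real.norm_eq_abs, norm_e, mul_one, abs_of_pos hr0]
  have hbound : ∀ m : ℕ, 1 ≤ m →
      ‖∑ l ∈ Finset.range (2 * g), ((((q:ℝ) ^ (-(2 * (k:ℝ) - 1) / 2) : ℝ) : ℂ) * e (θ l)) ^ m‖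
        ≤ ((N:ℝ) - 1) * (((q:ℝ) ^ (1 - (k:ℝ)))^m + ((q:ℝ) ^ (-(k:ℝ)))^m) := by
    intro m hm
    have hsum : (∑ l ∈ Finset.range (2*g),
          ((((q:ℝ) ^ (-(2 * (k:ℝ) - 1) / 2) : ℝ) : ℂ) * e (θ l)) ^ m)
        = (((((q:ℝ) ^ (-(2 * (k:ℝ) - 1) / 2))^m : ℝ)) : ℂ)
            * ∑ l ∈ Finset.range (2*g), e ((m:ℝ) * θ l) := by
      rw [Finset.mul_sum]
      refine Finset.sum_congr rfl fun l _ => ?_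
      rw [mul_pow, e_pow]
      push_cast
      ring
    have h2 : ‖∑ l ∈ Finset.range (2*g),
          ((((q:ℝ) ^ (-(2 * (k:ℝ) - 1) / 2) : ℝ) : ℂ) * e (θ l)) ^ m‖
        = ((q:ℝ) ^ (-(2 * (k:ℝ) - 1) / 2)) ^ m
            * ‖∑ l ∈ Finset.range (2*g), e ((m:ℝ) * θ l)‖ := by
      rw [hsum, norm_mul, Complex.norm_real, Real.norm_eq_abs,
        abs_of_pos (pow_pos hr0 m)]
    have h3 := hA m hm
    have h5 : ((q:ℝ) ^ (-(2 * (k:ℝ) - 1) / 2)) ^ m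
          * (((N:ℝ) - 1) * ((q:ℝ) ^ m + 1) * (q:ℝ) ^ (-(m:ℝ)/2))
        = ((N:ℝ) - 1) * (((q:ℝ) ^ (1 - (k:ℝ)))^m + ((q:ℝ) ^ (-(k:ℝ)))^m) := by
      have e1 := rpow_aux1 q k m hq
      have e2 := rpow_aux2 q k m hq
      linear_combination ((N:ℝ) - 1) * e1 + ((N:ℝ) - 1) * e2
    rw [h2, ← h5]
    exact mul_le_mul_of_nonneg_left h3 (pow_nonneg hr0.le m)
  have key := key_abstract (2*g) (fun l => (((q:ℝ) ^ (-(2 * (k:ℝ) - 1) / 2) : ℝ) : ℂ) * e (θ l))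
    ((q:ℝ) ^ (-(2 * (k:ℝ) - 1) / 2)) ((q:ℝ) ^ (1 - (k:ℝ))) ((q:ℝ) ^ (-(k:ℝ))) ((N:ℝ) - 1)
    hr0 hr1 hwn hx0 hxhalf hy0 hyx (by linarith) hbound
  refine ⟨key.1, key.2.trans ?_⟩
  have hxs : (q:ℝ) ^ (1 - (k:ℝ)) ≤ (Real.sqrt q)⁻¹ := by
    have h1 : (q:ℝ) ^ (1 - (k:ℝ)) ≤ (q:ℝ) ^ (-(1/2) : ℝ) :=
      Real.rpow_le_rpow_of_exponent_le hq1.le (by linarith)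
    rwa [Real.rpow_neg hq0.le, ← Real.sqrt_eq_rpow] at h1
  have hsq : 0 < Real.sqrt q := Real.sqrt_pos.mpr hq0
  rw [div_eq_mul_inv]
  have h6 : 4*((N:ℝ)-1)*((q:ℝ) ^ (1 - (k:ℝ))) + 4*((q:ℝ) ^ (1 - (k:ℝ)))
      ≤ 8 * (N:ℝ) * ((q:ℝ) ^ (1 - (k:ℝ))) := by nlinarith
  have h7 : 8 * (N:ℝ) * ((q:ℝ) ^ (1 - (k:ℝ))) ≤ 8 * (N:ℝ) * (Real.sqrt q)⁻¹ :=
    mul_le_mul_of_nonneg_left hxs (by positivity)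
  linarith

theorem statement4 :
    ∃ κ c' : ℝ, 0 < κ ∧ 0 < c' ∧
      ∀ (q N g k : ℕ) (θ : ℕ → ℝ), 2 ≤ q → 2 ≤ N → 2 ≤ g → 2 ≤ k →
        ArtinBound q N g θ →
        Real.log g > κ * Real.log (N * q) →
        (Real.log g) ^ (-(c' * N / (q : ℝ) ^ k)) * Real.exp (-(c' * N / Real.sqrt q)) ≤
            (∏ l ∈ Finset.range (2 * g),
                ‖1 - (((q : ℝ) ^ (-(2 * (k : ℝ) - 1) / 2) : ℝ) : ℂ) * e (θ l)‖) /
              ((1 - (q : ℝ) ^ (-(k : ℝ))) * (1 - (q : ℝ) ^ (1 - (k : ℝ)))) ∧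
          (∏ l ∈ Finset.range (2 * g),
              ‖1 - (((q : ℝ) ^ (-(2 * (k : ℝ) - 1) / 2) : ℝ) : ℂ) * e (θ l)‖) /
              ((1 - (q : ℝ) ^ (-(k : ℝ))) * (1 - (q : ℝ) ^ (1 - (k : ℝ)))) ≤
            (Real.log g) ^ (c' * N / (q : ℝ) ^ k) * Real.exp (c' * N / Real.sqrt q) := by
  refine ⟨1, 8, one_pos, by norm_num, ?_⟩
  intro q N g k θ hq hN hg hk hA hlog
  obtain ⟨hR0, hRb⟩ := key_bound q N g k θ hq hN hk hA
  set R : ℝ := (∏ l ∈ Finset.range (2 * g),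
      ‖1 - (((q : ℝ) ^ (-(2 * (k : ℝ) - 1) / 2) : ℝ) : ℂ) * e (θ l)‖) /
    ((1 - (q : ℝ) ^ (-(k : ℝ))) * (1 - (q : ℝ) ^ (1 - (k : ℝ)))) with hRdef
  have hq0 : (0:ℝ) < q := by positivity
  have hN' : (2:ℝ) ≤ N := by exact_mod_cast hN
  have hq' : (2:ℝ) ≤ q := by exact_mod_cast hq
  -- 1 ≤ log g
  have hlg1 : 1 ≤ Real.log g := by
    have hexp : Real.exp 1 < 4 := by
      have := Real.exp_one_lt_d9
      linarith
    have h4 : (4:ℝ) ≤ (N:ℝ) * (q:ℝ) := by nlinarith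
    have h1 : (1:ℝ) < Real.log ((N:ℝ) * (q:ℝ)) :=
      (Real.lt_log_iff_exp_lt (by positivity)).mpr (lt_of_lt_of_le hexp h4)
    rw [one_mul] at hlog
    linarith
  have habs := abs_le.mp hRb
  have hE0 : (0:ℝ) ≤ 8 * (N:ℝ) / (q:ℝ) ^ k := by positivity
  have hrpow1 : (1:ℝ) ≤ (Real.log g) ^ (8 * (N:ℝ) / (q:ℝ) ^ k) := by
    have := Real.rpow_le_rpow_of_exponent_le hlg1 hE0
    rwa [Real.rpow_zero] at this
  have hrpow2 : (Real.log g) ^ (-(8 * (N:ℝ) / (q:ℝ) ^ k)) ≤ 1 := by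
    have := Real.rpow_le_rpow_of_exponent_le hlg1 (neg_nonpos.mpr hE0)
    rwa [Real.rpow_zero] at this
  constructor
  · have h1 : Real.exp (-(8 * (N:ℝ) / Real.sqrt q)) ≤ R := by
      rw [← Real.exp_log hR0]
      exact Real.exp_le_exp.mpr habs.1
    have h2 := mul_le_mul_of_nonneg_right hrpow2 (Real.exp_pos (-(8 * (N:ℝ) / Real.sqrt q))).le
    rw [one_mul] at h2
    exact h2.trans h1
  · have h1 : R ≤ Real.exp (8 * (N:ℝ) / Real.sqrt q) := by
      rw [← Real.exp_log hR0]
      exact Real.exp_le_exp.mpr habs.2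
    have h2 := mul_le_mul_of_nonneg_right hrpow1 (Real.exp_pos (8 * (N:ℝ) / Real.sqrt q)).le
    rw [one_mul] at h2
    exact h1.trans h2
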